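/- Let R be a linearly ordered commutative ring in which there is no element x with 0 < x < 1, and let k ≥ 1 be a natural number. Let n, m_0, …, m_k, p be elements of R, all ≥ 0, such that for each i with 0 ≤ i ≤ k there exist elements a ≥ 0 and b ≥ 0 of R with m_i · a = (n + i) · b + 1 (where i denotes the image of the natural number i in R), and such that m_i ≤ n + i for all i. Then ∑_{i=0}^{k} ( m_i · ∏_{0 ≤ j ≤ k, j ≠ i} (n + j) ) ≠ p · ∏_{j=0}^{k} (n + j). -/

import Mathlib

set_option maxHeartbeats 1000000

open Finset

lemma one_le_of_pos {R : Type*} [CommRing R] [LinearOrder R] [IsStrictOrderedRing R]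
    (hdisc : ¬ ∃ x : R, 0 < x ∧ x < 1) {x : R} (hx : 0 < x) : 1 ≤ x := by
  by_contra h
  exact hdisc ⟨x, hx, lt_of_not_ge h⟩

lemma nat_of_bounded {R : Type*} [CommRing R] [LinearOrder R] [IsStrictOrderedRing R]
    (hdisc : ¬ ∃ x : R, 0 < x ∧ x < 1) :
    ∀ (N : ℕ) (x : R), 0 ≤ x → x ≤ (N : R) → ∃ m : ℕ, m ≤ N ∧ x = (m : R) := by
  intro N
  induction N with
  | zero =>
    intro x h0 h1
    exact ⟨0, le_refl 0, by simpa using le_antisymm (by exact_mod_cast h1) h0⟩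
  | succ N ih =>
    intro x h0 h1
    by_cases h : x ≤ (N : R)
    · obtain ⟨m, hm, he⟩ := ih x h0 h
      exact ⟨m, by omega, he⟩
    · push_neg at h
      have h2 : (1 : R) ≤ x - N := one_le_of_pos hdisc (by linarith)
      have h3 : x = ((N + 1 : ℕ) : R) := by push_cast at h1 ⊢; linarith
      exact ⟨N + 1, le_refl _, h3⟩

open Finset

lemma aux_between (n v i j : ℕ) (hij : i < j) (hv : 1 ≤ v) (hn : 1 ≤ n)
    (hi : (n + i).factorization 2 = v) (hj : (n + j).factorization 2 = v) :
    ∃ l, i < l ∧ l ≤ j ∧ v + 1 ≤ (n + l).factorization 2 := by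
  have hi0 : n + i ≠ 0 := by omega
  have hj0 : n + j ≠ 0 := by omega
  obtain ⟨a, ha⟩ : 2 ^ v ∣ n + i := by rw [← hi]; exact Nat.ordProj_dvd _ 2
  obtain ⟨b, hb⟩ : 2 ^ v ∣ n + j := by rw [← hj]; exact Nat.ordProj_dvd _ 2
  have haodd : ¬ 2 ∣ a := by
    intro h2a
    obtain ⟨c, hc⟩ := h2a
    have hdvd : 2 ^ (v + 1) ∣ n + i := ⟨c, by rw [ha, hc]; ring⟩
    have := (Nat.Prime.pow_dvd_iff_le_factorization Nat.prime_two hi0).mp hdvd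
    omega
  have hbodd : ¬ 2 ∣ b := by
    intro h2b
    obtain ⟨c, hc⟩ := h2b
    have hdvd : 2 ^ (v + 1) ∣ n + j := ⟨c, by rw [hb, hc]; ring⟩
    have := (Nat.Prime.pow_dvd_iff_le_factorization Nat.prime_two hj0).mp hdvd
    omega
  have hab : a < b := by
    have h1 : 2 ^ v * a < 2 ^ v * b := by omega
    exact Nat.lt_of_mul_lt_mul_left h1
  have hle : 2 ^ v * (a + 1) ≤ 2 ^ v * b := Nat.mul_le_mul_left _ (by omega)
  have hexp : 2 ^ v * (a + 1) = 2 ^ v * a + 2 ^ v := by ring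
  have hpow1 : 1 ≤ 2 ^ v := Nat.one_le_two_pow
  refine ⟨i + 2 ^ v, by omega, by omega, ?_⟩
  obtain ⟨c, hc⟩ : 2 ∣ a + 1 := by omega
  have h3 : 2 ^ v * (a + 1) = 2 ^ (v + 1) * c := by rw [hc, pow_succ]; ring
  have hdvd : 2 ^ (v + 1) ∣ n + (i + 2 ^ v) := ⟨c, by omega⟩
  exact (Nat.Prime.pow_dvd_iff_le_factorization Nat.prime_two (by omega)).mp hdvd

lemma nat_version (n k : ℕ) (hn : 1 ≤ n) (hk : 1 ≤ k) (m : ℕ → ℕ) (p : ℕ)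
    (hcop : ∀ i ≤ k, Nat.Coprime (m i) (n + i)) :
    ∑ i ∈ range (k + 1), m i * ∏ j ∈ (range (k + 1)).erase i, (n + j)
      ≠ p * ∏ j ∈ range (k + 1), (n + j) := by
  intro heq
  set f : ℕ → ℕ := fun x => (n + x).factorization 2 with hf
  obtain ⟨I, hImem, hImax⟩ := (range (k + 1)).exists_max_image f ⟨0, by simp⟩
  set v := f I with hv
  have hne : ∀ x : ℕ, n + x ≠ 0 := by omega
  -- v ≥ 1
  have hv1 : 1 ≤ v := by
    obtain ⟨i₀, hi₀, hdvd⟩ : ∃ i₀ ∈ range (k + 1), 2 ∣ n + i₀ := by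
      by_cases h : 2 ∣ n
      · exact ⟨0, by simp, by omega⟩
      · exact ⟨1, by simp [hk]; omega, by omega⟩
    have h1 : 1 ≤ f i₀ :=
      (Nat.Prime.pow_dvd_iff_le_factorization Nat.prime_two (hne i₀)).mp (by simpa using hdvd)
    exact le_trans h1 (hImax i₀ hi₀)
  -- uniqueness of maximizer
  have huniq : ∀ j ∈ range (k + 1), j ≠ I → f j < v := by
    intro j hjmem hjne
    rcases lt_or_eq_of_le (hImax j hjmem) with h | h
    · exact h
    exfalso
    have hjk : j < k + 1 := mem_range.mp hjmem
    have hIk : I < k + 1 := mem_range.mp hImem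
    rcases Nat.lt_or_ge j I with hlt | hge
    · obtain ⟨l, hl1, hl2, hl3⟩ := aux_between n v j I hlt hv1 hn h rfl
      have h2 := hImax l (mem_range.mpr (by omega))
      have h3 : f l = (n + l).factorization 2 := rfl
      omega
    · have hlt : I < j := by omega
      obtain ⟨l, hl1, hl2, hl3⟩ := aux_between n v I j hlt hv1 hn rfl h
      have h2 := hImax l (mem_range.mpr (by omega))
      have h3 : f l = (n + l).factorization 2 := rfl
      omega
  -- factorization of products
  have hprodfact : ∀ s : Finset ℕ,
      (∏ j ∈ s, (n + j)).factorization 2 = ∑ j ∈ s, f j := by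
    intro s
    rw [Nat.factorization_prod (fun x _ => hne x)]
    simp [hf, Finset.sum_apply']
  set F := ∑ l ∈ range (k + 1), f l with hF
  have hvF : v ≤ F := Finset.single_le_sum (f := f) (fun l _ => Nat.zero_le _) hImem
  have hPne : ∀ s : Finset ℕ, (∏ j ∈ s, (n + j)) ≠ 0 :=
    fun s => Finset.prod_ne_zero_iff.mpr (fun x _ => hne x)
  -- D divides RHS
  have hdvdP : 2 ^ (F - v + 1) ∣ ∏ j ∈ range (k + 1), (n + j) := by
    rw [Nat.Prime.pow_dvd_iff_le_factorization Nat.prime_two (hPne _), hprodfact]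
    omega
  -- D divides other terms
  have hdvdterm : ∀ j ∈ (range (k + 1)).erase I,
      2 ^ (F - v + 1) ∣ ∏ l ∈ (range (k + 1)).erase j, (n + l) := by
    intro j hj
    obtain ⟨hjne, hjmem⟩ := Finset.mem_erase.mp hj
    have hsum : f j + ∑ l ∈ (range (k + 1)).erase j, f l = F :=
      Finset.add_sum_erase _ f hjmem
    have hlt : f j < v := huniq j hjmem hjne
    rw [Nat.Prime.pow_dvd_iff_le_factorization Nat.prime_two (hPne _), hprodfact]
    omega
  -- D does not divide the I-term
  have hsumI : f I + ∑ l ∈ (range (k + 1)).erase I, f l = F :=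
    Finset.add_sum_erase _ f hImem
  have hIeven : 2 ∣ n + I := by
    rw [← Nat.pow_one 2, Nat.Prime.pow_dvd_iff_le_factorization Nat.prime_two (hne I)]
    exact hv1
  have hmIodd : ¬ 2 ∣ m I := by
    intro h2
    have hIk : I ≤ k := by have := mem_range.mp hImem; omega
    have := Nat.dvd_gcd h2 hIeven
    rw [hcop I hIk] at this
    omega
  have hmI0 : m I ≠ 0 := fun h => hmIodd (by simp [h])
  have hnotdvd : ¬ 2 ^ (F - v + 1) ∣ m I * ∏ l ∈ (range (k + 1)).erase I, (n + l) := by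
    rw [Nat.Prime.pow_dvd_iff_le_factorization Nat.prime_two
      (Nat.mul_ne_zero hmI0 (hPne _)), Nat.factorization_mul hmI0 (hPne _)]
    simp only [Finsupp.coe_add, Pi.add_apply]
    rw [hprodfact, Nat.factorization_eq_zero_of_not_dvd hmIodd]
    omega
  -- conclude
  apply hnotdvd
  have hsplit : m I * ∏ l ∈ (range (k + 1)).erase I, (n + l)
      + ∑ j ∈ (range (k + 1)).erase I, m j * ∏ l ∈ (range (k + 1)).erase j, (n + l)
      = ∑ i ∈ range (k + 1), m i * ∏ j ∈ (range (k + 1)).erase i, (n + j) :=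
    Finset.add_sum_erase _ (fun i => m i * ∏ j ∈ (range (k + 1)).erase i, (n + j)) hImem
  have hdvdsum : 2 ^ (F - v + 1) ∣
      ∑ j ∈ (range (k + 1)).erase I, m j * ∏ l ∈ (range (k + 1)).erase j, (n + l) :=
    Finset.dvd_sum (fun j hj => Dvd.dvd.mul_left (hdvdterm j hj) _)
  have hdvdS : 2 ^ (F - v + 1) ∣ p * ∏ j ∈ range (k + 1), (n + j) :=
    Dvd.dvd.mul_left hdvdP p
  have : m I * ∏ l ∈ (range (k + 1)).erase I, (n + l)
      = p * ∏ j ∈ range (k + 1), (n + j)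
        - ∑ j ∈ (range (k + 1)).erase I, m j * ∏ l ∈ (range (k + 1)).erase j, (n + l) := by
    omega
  rw [this]
  exact Nat.dvd_sub hdvdS hdvdsum

open Finset

theorem phi_k_in_discretely_ordered_ring
    {R : Type*} [CommRing R] [LinearOrder R] [IsStrictOrderedRing R]
    (hdisc : ¬ ∃ x : R, 0 < x ∧ x < 1)
    (k : ℕ) (hk : 1 ≤ k)
    (n : R) (m : ℕ → R) (p : R)
    (hn : 0 ≤ n) (hp : 0 ≤ p) (hm : ∀ i ≤ k, 0 ≤ m i)
    (hinv : ∀ i ≤ k, ∃ a b : R, 0 ≤ a ∧ 0 ≤ b ∧ m i * a = (n + (i : R)) * b + 1)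
    (hle : ∀ i ≤ k, m i ≤ n + (i : R)) :
    ∑ i ∈ Finset.range (k + 1),
        m i * ∏ j ∈ (Finset.range (k + 1)).erase i, (n + (j : R))
      ≠ p * ∏ j ∈ Finset.range (k + 1), (n + (j : R)) := by
  intro heq
  have hfac_nonneg : ∀ j : ℕ, (0:R) ≤ n + j := fun j => by positivity
  have h1le : ∀ i ≤ k, (1 : R) ≤ n + i := by
    intro i hi
    obtain ⟨a, b, ha, hb, hab⟩ := hinv i hi
    have hmi : 0 < m i := by
      rcases lt_or_eq_of_le (hm i hi) with h | h
      · exact h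
      · exfalso
        have h2 : (0:R) ≤ (n + i) * b := mul_nonneg (hfac_nonneg i) hb
        rw [← h, zero_mul] at hab
        linarith
    exact le_trans (one_le_of_pos hdisc hmi) (hle i hi)
  have hfac_pos : ∀ j ∈ range (k+1), (0:R) < n + j := fun j hj =>
    lt_of_lt_of_le one_pos (h1le j (by have := mem_range.mp hj; omega))
  -- each (n+i) divides the product of the others
  have hdvd : ∀ i ∈ range (k+1),
      (n + (i:R)) ∣ ∏ j ∈ (range (k+1)).erase i, (n + (j:R)) := by
    intro i hi
    have hik : i ≤ k := by have := mem_range.mp hi; omega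
    have h1 : (n + (i:R)) ∣ p * ∏ j ∈ range (k+1), (n + (j:R)) :=
      Dvd.dvd.mul_left (Finset.dvd_prod_of_mem _ hi) p
    have h2 : (n + (i:R)) ∣
        ∑ j ∈ (range (k+1)).erase i, m j * ∏ l ∈ (range (k+1)).erase j, (n + (l:R)) := by
      refine Finset.dvd_sum (fun j hj => ?_)
      obtain ⟨hjne, hjmem⟩ := Finset.mem_erase.mp hj
      exact Dvd.dvd.mul_left
        (Finset.dvd_prod_of_mem _ (Finset.mem_erase.mpr ⟨Ne.symm hjne, hi⟩)) _
    have hsplit : m i * ∏ j ∈ (range (k+1)).erase i, (n + (j:R))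
        + ∑ j ∈ (range (k+1)).erase i, m j * ∏ l ∈ (range (k+1)).erase j, (n + (l:R))
        = ∑ i ∈ range (k+1), m i * ∏ j ∈ (range (k+1)).erase i, (n + (j:R)) :=
      Finset.add_sum_erase _ (fun i => m i * ∏ j ∈ (range (k+1)).erase i, (n + (j:R))) hi
    have h3 : (n + (i:R)) ∣ m i * ∏ j ∈ (range (k+1)).erase i, (n + (j:R)) := by
      have he : m i * ∏ j ∈ (range (k+1)).erase i, (n + (j:R))
          = p * ∏ j ∈ range (k+1), (n + (j:R))
            - ∑ j ∈ (range (k+1)).erase i, m j * ∏ l ∈ (range (k+1)).erase j, (n + (l:R)) := by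
        rw [← heq, ← hsplit]; ring
      rw [he]
      exact dvd_sub h1 h2
    obtain ⟨a, b, ha, hb, hab⟩ := hinv i hik
    have he2 : ∏ j ∈ (range (k+1)).erase i, (n + (j:R))
        = a * (m i * ∏ j ∈ (range (k+1)).erase i, (n + (j:R)))
          - (n + (i:R)) * (b * ∏ j ∈ (range (k+1)).erase i, (n + (j:R))) := by
      linear_combination (-(∏ j ∈ (range (k+1)).erase i, (n + (j:R)))) * hab
    rw [he2]
    exact dvd_sub (h3.mul_left a) (dvd_mul_right _ _)
  -- n divides k!
  have h0mem : (0:ℕ) ∈ range (k+1) := mem_range.mpr (by omega)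
  have hdvd0 : n ∣ (k.factorial : R) := by
    have h := hdvd 0 h0mem
    have h' : n ∣ ∏ j ∈ (range (k+1)).erase 0, (n + (j:R)) := by simpa using h
    set J := Ideal.span ({n} : Set R) with hJ
    have hπ : Ideal.Quotient.mk J (∏ j ∈ (range (k+1)).erase 0, (n + (j:R))) = 0 :=
      Ideal.Quotient.eq_zero_iff_mem.mpr (Ideal.mem_span_singleton.mpr h')
    have hπn : Ideal.Quotient.mk J n = 0 :=
      Ideal.Quotient.eq_zero_iff_mem.mpr (Ideal.mem_span_singleton.mpr dvd_rfl)
    have hπprod : Ideal.Quotient.mk J (∏ j ∈ (range (k+1)).erase 0, (n + (j:R)))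
        = ((k.factorial : ℕ) : R ⧸ J) := by
      rw [map_prod]
      have hterm : ∀ j ∈ (range (k+1)).erase 0,
          Ideal.Quotient.mk J (n + (j:R)) = ((j:ℕ) : R ⧸ J) := by
        intro j hj
        rw [map_add, hπn, zero_add, map_natCast]
      rw [Finset.prod_congr rfl hterm, ← Nat.cast_prod]
      congr 1
      have hset : (range (k+1)).erase 0 = Ico 1 (k+1) := by
        ext x; simp [Finset.mem_erase, Finset.mem_Ico]; omega
      rw [hset, Finset.prod_Ico_id_eq_factorial]
    have hzero : Ideal.Quotient.mk J ((k.factorial : ℕ) : R) = 0 := by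
      rw [map_natCast, ← hπprod]; exact hπ
    exact Ideal.mem_span_singleton.mp (Ideal.Quotient.eq_zero_iff_mem.mp hzero)
  have hn1 : (1:R) ≤ n := by have := h1le 0 (by omega); simpa using this
  obtain ⟨q, hq⟩ := hdvd0
  have hkfpos : (0:R) < (k.factorial : R) := by
    have := Nat.factorial_pos k; exact_mod_cast this
  have hqpos : 0 < q := by
    rcases le_or_gt q 0 with h | h
    · exfalso; nlinarith
    · exact h
  have hq1 : 1 ≤ q := one_le_of_pos hdisc hqpos
  have hnle : n ≤ (k.factorial : R) := by nlinarith
  obtain ⟨n₀, hn₀le, hn₀⟩ := nat_of_bounded hdisc k.factorial n hn hnle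
  have hn₀1 : 1 ≤ n₀ := by
    rcases Nat.eq_zero_or_pos n₀ with h | h
    · rw [h] at hn₀; rw [hn₀] at hn1; norm_num at hn1
    · exact h
  -- the m i are natural numbers
  have hmchoice : ∀ i : ℕ, ∃ mi : ℕ, i ≤ k → (mi ≤ n₀ + i ∧ m i = (mi : R)) := by
    intro i
    by_cases hi : i ≤ k
    · have hb : m i ≤ ((n₀ + i : ℕ) : R) := by
        push_cast
        rw [← hn₀]
        exact hle i hi
      obtain ⟨mi, h1, h2⟩ := nat_of_bounded hdisc (n₀ + i) (m i) (hm i hi) hb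
      exact ⟨mi, fun _ => ⟨h1, h2⟩⟩
    · exact ⟨0, fun h => absurd h hi⟩
  choose μ hμ using hmchoice
  -- p is a natural number
  have hPpos : 0 < ∏ j ∈ range (k+1), (n + (j:R)) := Finset.prod_pos hfac_pos
  have hprod_nonneg : ∀ i : ℕ, (0:R) ≤ ∏ j ∈ (range (k+1)).erase i, (n + (j:R)) :=
    fun i => Finset.prod_nonneg (fun j _ => hfac_nonneg j)
  have hSle : p * ∏ j ∈ range (k+1), (n + (j:R))
      ≤ ((k+1:ℕ):R) * ∏ j ∈ range (k+1), (n + (j:R)) := by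
    rw [← heq]
    calc ∑ i ∈ range (k+1), m i * ∏ j ∈ (range (k+1)).erase i, (n + (j:R))
        ≤ ∑ i ∈ range (k+1), (n + (i:R)) * ∏ j ∈ (range (k+1)).erase i, (n + (j:R)) :=
          Finset.sum_le_sum (fun i hi =>
            mul_le_mul_of_nonneg_right (hle i (by have := mem_range.mp hi; omega))
              (hprod_nonneg i))
      _ = ∑ _i ∈ range (k+1), ∏ j ∈ range (k+1), (n + (j:R)) :=
          Finset.sum_congr rfl (fun i hi => by
            rw [Finset.mul_prod_erase (range (k+1)) (fun j : ℕ => n + (j:R)) hi])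
      _ = ((k+1:ℕ):R) * ∏ j ∈ range (k+1), (n + (j:R)) := by
          rw [Finset.sum_const, Finset.card_range, nsmul_eq_mul]
  have hple : p ≤ ((k+1:ℕ):R) := le_of_mul_le_mul_right hSle hPpos
  obtain ⟨p₀, hp₀le, hp₀⟩ := nat_of_bounded hdisc (k+1) p hp hple
  -- coprimality
  have hcop : ∀ i ≤ k, Nat.Coprime (μ i) (n₀ + i) := by
    intro i hi
    obtain ⟨hμle, hμeq⟩ := hμ i hi
    set d := Nat.gcd (μ i) (n₀ + i) with hd
    obtain ⟨a, b, ha, hb, hab⟩ := hinv i hi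
    have hd1 : (d:R) ∣ 1 := by
      have h1 : (d:R) ∣ m i := by
        rw [hμeq]; exact Nat.cast_dvd_cast (Nat.gcd_dvd_left _ _)
      have h2 : (d:R) ∣ n + (i:R) := by
        have h3 : (d:R) ∣ ((n₀ + i : ℕ):R) := Nat.cast_dvd_cast (Nat.gcd_dvd_right _ _)
        have h4 : ((n₀ + i:ℕ):R) = n + (i:R) := by push_cast; rw [← hn₀]
        rwa [h4] at h3
      have h5 : (1:R) = m i * a - (n + (i:R)) * b := by linarith
      rw [h5]
      exact dvd_sub (h1.mul_right a) (h2.mul_right b)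
    obtain ⟨c, hc⟩ := hd1
    have hdne : d ≠ 0 := by
      intro h0
      have h00 := Nat.eq_zero_of_gcd_eq_zero_right (hd ▸ h0)
      omega
    by_contra hne
    rw [Nat.Coprime] at hne
    have hd2 : 2 ≤ d := by omega
    have hd2R : (2:R) ≤ (d:R) := by exact_mod_cast hd2
    have hcpos : 0 < c := by
      rcases le_or_gt c 0 with h | h
      · exfalso; nlinarith
      · exact h
    have hc1 : 1 ≤ c := one_le_of_pos hdisc hcpos
    nlinarith
  -- transfer the equality to ℕ
  have hcast : ((∑ i ∈ range (k+1), μ i * ∏ j ∈ (range (k+1)).erase i, (n₀ + j) : ℕ) : R)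
      = ((p₀ * ∏ j ∈ range (k+1), (n₀ + j) : ℕ) : R) := by
    push_cast
    rw [← hn₀, ← hp₀]
    have hterm : ∀ i ∈ range (k+1),
        ((μ i : ℕ):R) * ∏ j ∈ (range (k+1)).erase i, (n + (j:R))
          = m i * ∏ j ∈ (range (k+1)).erase i, (n + (j:R)) := by
      intro i hi
      rw [(hμ i (by have := mem_range.mp hi; omega)).2]
    rw [Finset.sum_congr rfl hterm]
    exact heq
  exact nat_version n₀ k hn₀1 hk μ p₀ hcop (Nat.cast_injective hcast)
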